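/- (Chernoff bound for Bernoulli empirical means in Kullback–Leibler form.) Let X₁, …, X_n be i.i.d. Bernoulli random variables with mean μ ∈ (0,1), and let ε ≥ 0 with μ + ε ≤ 1. Then P( (1/n)·∑_{i=1}^n X_i − μ ≥ ε ) ≤ exp(−n·KL(μ+ε, μ)). -/

import Mathlib

open MeasureTheory ProbabilityTheory

/-- Chernoff bound for Bernoulli empirical means in Kullback–Leibler form:
`P((1/n)∑ Xᵢ − μ ≥ ε) ≤ exp(−n·KL(μ+ε, μ))`, where
`KL(u,v) = u log(u/v) + (1−u) log((1−u)/(1−v))`. -/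
theorem bernoulli_chernoff_kl
    {Ω : Type*} [MeasurableSpace Ω] (P : Measure Ω) [IsProbabilityMeasure P]
    (n : ℕ) (hn : 0 < n)
    (μ : ℝ) (hμ0 : 0 < μ) (hμ1 : μ < 1)
    (X : Fin n → Ω → ℝ)
    (hmeas : ∀ i, Measurable (X i))
    (hindep : iIndepFun X P)
    (hvals : ∀ i, ∀ᵐ ω ∂P, X i ω = 0 ∨ X i ω = 1)
    (hbern : ∀ i, P {ω | X i ω = 1} = ENNReal.ofReal μ)
    (ε : ℝ) (hε : 0 ≤ ε) (hμε : μ + ε ≤ 1) :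
    P {ω | (1/n : ℝ) * ∑ i, X i ω - μ ≥ ε}
      ≤ ENNReal.ofReal (Real.exp (-(n : ℝ) *
          ((μ + ε) * Real.log ((μ + ε) / μ) +
            (1 - (μ + ε)) * Real.log ((1 - (μ + ε)) / (1 - μ))))) := by
  have hn' : (0:ℝ) < (n:ℝ) := by exact_mod_cast hn
  have ha0 : 0 < μ + ε := by linarith
  -- the set rewriting
  have hset : {ω | (1/n : ℝ) * ∑ i, X i ω - μ ≥ ε}
      = {ω | (n:ℝ) * (μ + ε) ≤ (∑ i, X i) ω} := by
    ext ω
    simp only [Set.mem_setOf_eq, ge_iff_le, Finset.sum_apply]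
    rw [le_sub_iff_add_le, one_div, ← div_eq_inv_mul, le_div_iff₀ hn']
    constructor <;> intro h <;> nlinarith
  -- measurability of the "success" sets
  have hAmeas : ∀ i, MeasurableSet {ω | X i ω = 1} := fun i => by
    have : {ω | X i ω = 1} = X i ⁻¹' {1} := by ext ω; simp
    rw [this]; exact (hmeas i) (measurableSet_singleton 1)
  -- per-coordinate integrability and mgf
  have hint : ∀ (t : ℝ) (i : Fin n),
      Integrable (fun ω => Real.exp (t * X i ω)) P ∧
        mgf (X i) P t = μ * Real.exp t + (1 - μ) := by
    intro t i
    have heq : (fun ω => Real.exp (t * X i ω)) =ᵐ[P]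
        fun ω => Set.indicator {ω | X i ω = 1} (fun _ => Real.exp t - 1) ω + 1 := by
      filter_upwards [hvals i] with ω hω
      rcases hω with h | h <;> simp [Set.indicator_apply, h]
    have hind : Integrable
        (fun ω => Set.indicator {ω | X i ω = 1} (fun _ => Real.exp t - 1) ω + 1) P :=
      ((integrable_const (Real.exp t - 1)).indicator (hAmeas i)).add (integrable_const 1)
    refine ⟨hind.congr heq.symm, ?_⟩
    rw [mgf, integral_congr_ae heq,
      integral_add ((integrable_const (Real.exp t - 1)).indicator (hAmeas i))
        (integrable_const 1),
      integral_indicator_const _ (hAmeas i), measureReal_def, hbern i, integral_const]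
    simp [ENNReal.toReal_ofReal hμ0.le]
    ring
  -- the Chernoff bound for every t ≥ 0
  have key : ∀ t : ℝ, 0 ≤ t →
      (P {ω | (n:ℝ) * (μ + ε) ≤ (∑ i, X i) ω}).toReal
        ≤ Real.exp (-t * ((n:ℝ) * (μ + ε))) * (μ * Real.exp t + (1 - μ))^n := by
    intro t ht
    have hmgf : mgf (∑ i, X i) P t = (μ * Real.exp t + (1 - μ))^n := by
      rw [hindep.mgf_sum hmeas]
      rw [Finset.prod_congr rfl (fun i _ => (hint t i).2)]
      simp
    have hintS : Integrable (fun ω => Real.exp (t * (∑ i, X i) ω)) P :=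
      hindep.integrable_exp_mul_sum hmeas (fun i _ => (hint t i).1)
    have := measure_ge_le_exp_mul_mgf (X := ∑ i, X i) (μ := P)
      ((n:ℝ) * (μ + ε)) ht hintS
    rwa [hmgf] at this
  rw [hset]
  rcases lt_or_eq_of_le hμε with hlt | heq1
  · -- case μ + ε < 1 : optimal t = log((μ+ε)(1-μ)/((1-(μ+ε))μ))
    have h1a : (0:ℝ) < 1 - (μ + ε) := by linarith
    have h1μ : (0:ℝ) < 1 - μ := by linarith
    set t : ℝ := Real.log ((μ + ε) * (1 - μ) / ((1 - (μ + ε)) * μ)) with ht_def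
    have harg : (0:ℝ) < (μ + ε) * (1 - μ) / ((1 - (μ + ε)) * μ) := by positivity
    have ht0 : 0 ≤ t := by
      apply Real.log_nonneg
      rw [le_div_iff₀ (by positivity)]
      nlinarith
    have hexp_t : Real.exp t = (μ + ε) * (1 - μ) / ((1 - (μ + ε)) * μ) :=
      Real.exp_log harg
    have hB : μ * Real.exp t + (1 - μ) = (1 - μ) / (1 - (μ + ε)) := by
      rw [hexp_t]; field_simp; ring
    have hBpos : (0:ℝ) < (1 - μ) / (1 - (μ + ε)) := by positivity
    -- log identities
    have hla : t = Real.log (μ + ε) + Real.log (1 - μ)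
        - (Real.log (1 - (μ + ε)) + Real.log μ) := by
      rw [ht_def, Real.log_div (by positivity) (by positivity),
        Real.log_mul ha0.ne' h1μ.ne', Real.log_mul h1a.ne' hμ0.ne']
    have hl1 : Real.log ((μ + ε) / μ) = Real.log (μ + ε) - Real.log μ :=
      Real.log_div ha0.ne' hμ0.ne'
    have hl2 : Real.log ((1 - (μ + ε)) / (1 - μ))
        = Real.log (1 - (μ + ε)) - Real.log (1 - μ) :=
      Real.log_div h1a.ne' h1μ.ne'
    have hl3 : Real.log ((1 - μ) / (1 - (μ + ε)))
        = Real.log (1 - μ) - Real.log (1 - (μ + ε)) :=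
      Real.log_div h1μ.ne' h1a.ne'
    have hEq : Real.exp (-t * ((n:ℝ) * (μ + ε))) * (μ * Real.exp t + (1 - μ))^n
        = Real.exp (-(n : ℝ) *
            ((μ + ε) * Real.log ((μ + ε) / μ) +
              (1 - (μ + ε)) * Real.log ((1 - (μ + ε)) / (1 - μ)))) := by
      rw [hB, ← Real.exp_log hBpos, ← Real.exp_nat_mul, ← Real.exp_add]
      congr 1
      rw [hl3, hl1, hl2, hla]
      ring
    calc P {ω | (n:ℝ) * (μ + ε) ≤ (∑ i, X i) ω}
        = ENNReal.ofReal (P {ω | (n:ℝ) * (μ + ε) ≤ (∑ i, X i) ω}).toReal :=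
          (ENNReal.ofReal_toReal (measure_ne_top _ _)).symm
      _ ≤ _ := by
          apply ENNReal.ofReal_le_ofReal
          rw [← hEq]
          exact key t ht0
  · -- case μ + ε = 1 : take t → ∞
    have hlim : Filter.Tendsto (fun t : ℝ => (μ + (1 - μ) * Real.exp (-t))^n)
        Filter.atTop (nhds (μ ^ n)) := by
      have h1 : Filter.Tendsto (fun t : ℝ => μ + (1 - μ) * Real.exp (-t))
          Filter.atTop (nhds (μ + (1 - μ) * 0)) :=
        tendsto_const_nhds.add (tendsto_const_nhds.mul Real.tendsto_exp_neg_atTop_nhds_zero)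
      simpa using h1.pow n
    have hbd : (P {ω | (n:ℝ) * (μ + ε) ≤ (∑ i, X i) ω}).toReal ≤ μ ^ n := by
      refine ge_of_tendsto hlim ?_
      filter_upwards [Filter.eventually_ge_atTop 0] with t ht
      have h1 : Real.exp (-t * ((n:ℝ) * (μ + ε))) * (μ * Real.exp t + (1 - μ))^n
          = (μ + (1 - μ) * Real.exp (-t))^n := by
        rw [heq1, mul_one, show -t * (n:ℝ) = (n:ℝ) * (-t) by ring, Real.exp_nat_mul, ← mul_pow]
        congr 1
        have hmul : Real.exp (-t) * Real.exp t = 1 := by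
          rw [← Real.exp_add]; simp
        linear_combination μ * hmul
      rw [← h1]
      exact key t ht
    have htgt : Real.exp (-(n : ℝ) *
        ((μ + ε) * Real.log ((μ + ε) / μ) +
          (1 - (μ + ε)) * Real.log ((1 - (μ + ε)) / (1 - μ)))) = μ ^ n := by
      rw [heq1]
      simp only [sub_self, zero_mul, add_zero, one_mul]
      rw [show (1:ℝ)/μ = μ⁻¹ by ring, Real.log_inv]
      rw [show -(n:ℝ) * -Real.log μ = (n:ℝ) * Real.log μ by ring,
        Real.exp_nat_mul, Real.exp_log hμ0]
    calc P {ω | (n:ℝ) * (μ + ε) ≤ (∑ i, X i) ω}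
        = ENNReal.ofReal (P {ω | (n:ℝ) * (μ + ε) ≤ (∑ i, X i) ω}).toReal :=
          (ENNReal.ofReal_toReal (measure_ne_top _ _)).symm
      _ ≤ _ := by
          apply ENNReal.ofReal_le_ofReal
          rw [htgt]
          exact hbd
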